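/- arXiv:1504.08321 — 5 statements merged into one kernel-verified Lean document; each statement's English description precedes it below -/
import Mathlib

section
/- Completeness of CP with respect to evaluation tree semantics: for all conditional statements P, Q over atoms A, CP proves P = Q if and only if se(P) = se(Q). -/
inductive CS (A : Type) : Type
  | tt : CS A
  | ff : CS A
  | atom : A → CS A
  | cond : CS A → CS A → CS A → CS A

namespace CS

variable {A : Type}

/-- Basic forms: the central condition is always an atom. -/
inductive IsBasic : CS A → Prop
  | tt : IsBasic tt
  | ff : IsBasic ff
  | cond {p q : CS A} (a : A) : IsBasic p → IsBasic q → IsBasic (cond p (atom a) q)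

/-- Provability from the axioms CP of proposition algebra. `cond x y z` is x ◁ y ▷ z. -/
inductive CP : CS A → CS A → Prop
  | refl (p : CS A) : CP p p
  | symm {p q} : CP p q → CP q p
  | trans {p q r} : CP p q → CP q r → CP p r
  | congr {p p' q q' r r'} :
      CP p p' → CP q q' → CP r r' → CP (.cond p q r) (.cond p' q' r')
  | cp1 (x y : CS A) : CP (.cond x .tt y) x
  | cp2 (x y : CS A) : CP (.cond x .ff y) y
  | cp3 (x : CS A) : CP (.cond .tt x .ff) x
  | cp4 (x y z u v : CS A) :
      CP (.cond x (.cond y z u) v) (.cond (.cond x y v) z (.cond x u v))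

/-- Evaluation trees with leaves T, F and internal nodes labeled by atoms. -/
inductive ET (A : Type) : Type
  | tt : ET A
  | ff : ET A
  | node : ET A → A → ET A → ET A

/-- Leaf replacement X[T↦Y, F↦Z] on evaluation trees. -/
def ET.repl : ET A → ET A → ET A → ET A
  | .tt, y, _ => y
  | .ff, _, z => z
  | .node l a r, y, z => .node (ET.repl l y z) a (ET.repl r y z)

/-- Short-circuit evaluation into evaluation trees. -/
def se : CS A → ET A
  | .tt => .tt
  | .ff => .ff
  | .atom a => .node .tt a .ff
  | .cond p q r => ET.repl (se q) (se p) (se r)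

/-- Syntactic leaf replacement P[T↦Q, F↦R] on (basic) conditional statements. -/
def srepl : CS A → CS A → CS A → CS A
  | .tt, y, _ => y
  | .ff, _, z => z
  | .atom a, _, _ => .atom a
  | .cond p c q, y, z => .cond (srepl p y z) c (srepl q y z)

/-- The basic form function. -/
def bf : CS A → CS A
  | .tt => .tt
  | .ff => .ff
  | .atom a => .cond .tt (.atom a) .ff
  | .cond p q r => srepl (bf q) (bf p) (bf r)

/-- Depth of a basic form. -/
def d : CS A → ℕ
  | .cond p _ r => 1 + max (d p) (d r)
  | _ => 0

end CS
namespace CS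
variable {A : Type} [DecidableEq A]
def fA (a : A) : CS A → CS A
  | .cond p (.atom b) q => if b = a then .cond (fA a p) (.atom a) (fA a p) else .cond p (.atom b) q
  | x => x
def gA (a : A) : CS A → CS A
  | .cond p (.atom b) q => if b = a then .cond (gA a q) (.atom a) (gA a q) else .cond p (.atom b) q
  | x => x
theorem d_fA (a : A) : ∀ p : CS A, d (fA a p) ≤ d p
  | .tt => le_refl _
  | .ff => le_refl _
  | .atom _ => le_refl _
  | .cond p .tt q => le_refl _
  | .cond p .ff q => le_refl _
  | .cond p (.atom b) q => by
      by_cases h : b = a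
      · have ih := d_fA a p
        simp only [fA, h, if_true, d]
        omega
      · simp [fA, h]
  | .cond p (.cond x y z) q => le_refl _
theorem d_gA (a : A) : ∀ p : CS A, d (gA a p) ≤ d p
  | .tt => le_refl _
  | .ff => le_refl _
  | .atom _ => le_refl _
  | .cond p .tt q => le_refl _
  | .cond p .ff q => le_refl _
  | .cond p (.atom b) q => by
      by_cases h : b = a
      · have ih := d_gA a q
        simp only [gA, h, if_true, d]
        omega
      · simp [gA, h]
  | .cond p (.cond x y z) q => le_refl _
def rpf : CS A → CS A
  | .cond p (.atom a) q => .cond (rpf (fA a p)) (.atom a) (rpf (gA a q))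
  | x => x
termination_by p => d p
decreasing_by
  · have := d_fA a p; simp only [d]; omega
  · have := d_gA a q; simp only [d]; omega
end CS
namespace CS
variable {A : Type} [DecidableEq A]

/-- Memorizing auxiliary function ℓ_a on basic forms. -/
def lA (a : A) : CS A → CS A
  | .cond p (.atom b) q => if b = a then lA a p else .cond (lA a p) (.atom b) (lA a q)
  | x => x

/-- Memorizing auxiliary function r_a on basic forms. -/
def rA (a : A) : CS A → CS A
  | .cond p (.atom b) q => if b = a then rA a q else .cond (rA a p) (.atom b) (rA a q)
  | x => x

theorem d_lA (a : A) : ∀ p : CS A, d (lA a p) ≤ d p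
  | .tt => le_refl _
  | .ff => le_refl _
  | .atom _ => le_refl _
  | .cond p .tt q => le_refl _
  | .cond p .ff q => le_refl _
  | .cond p (.atom b) q => by
      by_cases h : b = a
      · have ih := d_lA a p
        simp only [lA, h, if_true, d]
        omega
      · have ih1 := d_lA a p
        have ih2 := d_lA a q
        simp only [lA, h, if_false, d]
        omega
  | .cond p (.cond x y z) q => le_refl _

theorem d_rA (a : A) : ∀ p : CS A, d (rA a p) ≤ d p
  | .tt => le_refl _
  | .ff => le_refl _
  | .atom _ => le_refl _
  | .cond p .tt q => le_refl _
  | .cond p .ff q => le_refl _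
  | .cond p (.atom b) q => by
      by_cases h : b = a
      · have ih := d_rA a q
        simp only [rA, h, if_true, d]
        omega
      · have ih1 := d_rA a p
        have ih2 := d_rA a q
        simp only [rA, h, if_false, d]
        omega
  | .cond p (.cond x y z) q => le_refl _

/-- The function mf transforming basic forms into mem-basic forms. -/
def mf : CS A → CS A
  | .cond p (.atom a) q => .cond (mf (lA a p)) (.atom a) (mf (rA a q))
  | x => x
termination_by p => d p
decreasing_by
  · have := d_lA a p; simp only [d]; omega
  · have := d_rA a q; simp only [d]; omega

/-- Depth of an evaluation tree. -/
def ET.d : ET A → ℕ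
  | .node l _ r => 1 + max (ET.d l) (ET.d r)
  | _ => 0

/-- Repetition-proof auxiliary transformation F_a on evaluation trees. -/
def ET.FA (a : A) : ET A → ET A
  | .node l b r => if b = a then .node (ET.FA a l) a (ET.FA a l) else .node l b r
  | x => x

/-- Repetition-proof auxiliary transformation G_a on evaluation trees. -/
def ET.GA (a : A) : ET A → ET A
  | .node l b r => if b = a then .node (ET.GA a r) a (ET.GA a r) else .node l b r
  | x => x

theorem ET.d_FA (a : A) : ∀ x : ET A, ET.d (ET.FA a x) ≤ ET.d x
  | .tt => le_refl _
  | .ff => le_refl _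
  | .node l b r => by
      by_cases h : b = a
      · have ih := ET.d_FA a l
        simp only [ET.FA, h, if_true, ET.d]
        omega
      · simp [ET.FA, h]

theorem ET.d_GA (a : A) : ∀ x : ET A, ET.d (ET.GA a x) ≤ ET.d x
  | .tt => le_refl _
  | .ff => le_refl _
  | .node l b r => by
      by_cases h : b = a
      · have ih := ET.d_GA a r
        simp only [ET.GA, h, if_true, ET.d]
        omega
      · simp [ET.GA, h]

/-- The transformation rp on evaluation trees. -/
def ET.rp : ET A → ET A
  | .node l a r => .node (ET.rp (ET.FA a l)) a (ET.rp (ET.GA a r))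
  | x => x
termination_by x => ET.d x
decreasing_by
  · have := ET.d_FA a l; simp only [ET.d]; omega
  · have := ET.d_GA a r; simp only [ET.d]; omega

end CS
namespace CS
variable {A : Type}

/-- Side condition for rp-basic forms: a non-constant immediate subterm of a node
labeled `a` either has central condition different from `a`, or equal outer arguments. -/
def SideOk (a : A) : CS A → Prop
  | .tt => True
  | .ff => True
  | .cond p (.atom b) q => b ≠ a ∨ p = q
  | _ => False

/-- Rp-basic forms. -/
inductive IsRpBasic : CS A → Prop
  | tt : IsRpBasic tt
  | ff : IsRpBasic ff
  | cond {p q : CS A} (a : A) : IsRpBasic p → IsRpBasic q →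
      SideOk a p → SideOk a q → IsRpBasic (cond p (atom a) q)

/-- Mem-basic forms over a subset A' of the atoms. -/
inductive IsMemBasicOver : Set A → CS A → Prop
  | tt (A' : Set A) : IsMemBasicOver A' tt
  | ff (A' : Set A) : IsMemBasicOver A' ff
  | cond {A' : Set A} {p q : CS A} (a : A) : a ∈ A' →
      IsMemBasicOver (A' \ {a}) p → IsMemBasicOver (A' \ {a}) q →
      IsMemBasicOver A' (cond p (atom a) q)

/-- Mem-basic forms. -/
def IsMemBasic (p : CS A) : Prop := ∃ A' : Set A, IsMemBasicOver A' p

/-- Provability from CPrp: CP plus the repetition-proof axiom schemes. -/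
inductive CPrp : CS A → CS A → Prop
  | refl (p : CS A) : CPrp p p
  | symm {p q} : CPrp p q → CPrp q p
  | trans {p q r} : CPrp p q → CPrp q r → CPrp p r
  | congr {p p' q q' r r'} :
      CPrp p p' → CPrp q q' → CPrp r r' → CPrp (.cond p q r) (.cond p' q' r')
  | cp1 (x y : CS A) : CPrp (.cond x .tt y) x
  | cp2 (x y : CS A) : CPrp (.cond x .ff y) y
  | cp3 (x : CS A) : CPrp (.cond .tt x .ff) x
  | cp4 (x y z u v : CS A) :
      CPrp (.cond x (.cond y z u) v) (.cond (.cond x y v) z (.cond x u v))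
  | rp1 (a : A) (x y z : CS A) :
      CPrp (.cond (.cond x (.atom a) y) (.atom a) z)
           (.cond (.cond x (.atom a) x) (.atom a) z)
  | rp2 (a : A) (x y z : CS A) :
      CPrp (.cond x (.atom a) (.cond y (.atom a) z))
           (.cond x (.atom a) (.cond z (.atom a) z))

/-- Provability from CPmem: CP plus the memorizing axiom. -/
inductive CPmem : CS A → CS A → Prop
  | refl (p : CS A) : CPmem p p
  | symm {p q} : CPmem p q → CPmem q p
  | trans {p q r} : CPmem p q → CPmem q r → CPmem p r
  | congr {p p' q q' r r'} :
      CPmem p p' → CPmem q q' → CPmem r r' → CPmem (.cond p q r) (.cond p' q' r')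
  | cp1 (x y : CS A) : CPmem (.cond x .tt y) x
  | cp2 (x y : CS A) : CPmem (.cond x .ff y) y
  | cp3 (x : CS A) : CPmem (.cond .tt x .ff) x
  | cp4 (x y z u v : CS A) :
      CPmem (.cond x (.cond y z u) v) (.cond (.cond x y v) z (.cond x u v))
  | mem (x y z u v w : CS A) :
      CPmem (.cond x y (.cond z u (.cond v y w))) (.cond x y (.cond z u w))

end CS

namespace CS
variable {A : Type}

theorem ET.repl_tt_ff : ∀ x : ET A, ET.repl x .tt .ff = x
  | .tt => rfl
  | .ff => rfl
  | .node l a r => by simp [ET.repl, ET.repl_tt_ff l, ET.repl_tt_ff r]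

theorem ET.repl_repl : ∀ (z y u x v : ET A),
    ET.repl (ET.repl z y u) x v = ET.repl z (ET.repl y x v) (ET.repl u x v)
  | .tt, _, _, _, _ => rfl
  | .ff, _, _, _, _ => rfl
  | .node l a r, y, u, x, v => by
      simp [ET.repl, ET.repl_repl l y u x v, ET.repl_repl r y u x v]

theorem se_sound {P Q : CS A} (h : CP P Q) : se P = se Q := by
  induction h with
  | refl => rfl
  | symm _ ih => exact ih.symm
  | trans _ _ ih1 ih2 => exact ih1.trans ih2
  | congr _ _ _ ih1 ih2 ih3 => simp [se, ih1, ih2, ih3]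
  | cp1 => rfl
  | cp2 => rfl
  | cp3 x => exact ET.repl_tt_ff (se x)
  | cp4 x y z u v => exact ET.repl_repl (se z) (se y) (se u) (se x) (se v)

theorem srepl_basic {y p r : CS A} (hy : IsBasic y) (hp : IsBasic p) (hr : IsBasic r) :
    IsBasic (srepl y p r) := by
  induction hy with
  | tt => exact hp
  | ff => exact hr
  | cond a _ _ ih1 ih2 => exact IsBasic.cond a ih1 ih2

theorem bf_basic : ∀ P : CS A, IsBasic (bf P)
  | .tt => IsBasic.tt
  | .ff => IsBasic.ff
  | .atom a => IsBasic.cond a IsBasic.tt IsBasic.ff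
  | .cond p q r => srepl_basic (bf_basic q) (bf_basic p) (bf_basic r)

theorem cp_srepl {y : CS A} (hy : IsBasic y) (p r : CS A) :
    CP (.cond p y r) (srepl y p r) := by
  induction hy with
  | tt => exact CP.cp1 p r
  | ff => exact CP.cp2 p r
  | cond a _ _ ih1 ih2 =>
      exact CP.trans (CP.cp4 _ _ _ _ _) (CP.congr ih1 (CP.refl _) ih2)

theorem cp_bf : ∀ P : CS A, CP P (bf P)
  | .tt => CP.refl _
  | .ff => CP.refl _
  | .atom a => CP.symm (CP.cp3 _)
  | .cond p q r =>
      CP.trans (CP.congr (cp_bf p) (cp_bf q) (cp_bf r))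
        (cp_srepl (bf_basic q) (bf p) (bf r))

theorem se_basic_eq (p q : CS A) (a : A) :
    se (.cond p (.atom a) q) = .node (se p) a (se q) := rfl

theorem se_basic_inj {p : CS A} (hp : IsBasic p) :
    ∀ {q : CS A}, IsBasic q → se p = se q → p = q := by
  induction hp with
  | tt =>
      intro q hq h
      cases hq with
      | tt => rfl
      | ff => simp [se] at h
      | cond b _ _ => rw [se_basic_eq] at h; simp [se] at h
  | ff =>
      intro q hq h
      cases hq with
      | tt => simp [se] at h
      | ff => rfl
      | cond b _ _ => rw [se_basic_eq] at h; simp [se] at h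
  | cond a _ _ ih1 ih2 =>
      intro q hq h
      cases hq with
      | tt => rw [se_basic_eq] at h; simp [se] at h
      | ff => rw [se_basic_eq] at h; simp [se] at h
      | cond b hq1 hq2 =>
          rw [se_basic_eq, se_basic_eq] at h
          injection h with h1 h2 h3
          rw [ih1 hq1 h1, ih2 hq2 h3, h2]

end CS

theorem stmt4 {A : Type} (P Q : CS A) :
    CS.CP P Q ↔ CS.se P = CS.se Q := by
  constructor
  · exact CS.se_sound
  · intro h
    have hbf : CS.bf P = CS.bf Q :=
      CS.se_basic_inj (CS.bf_basic P) (CS.bf_basic Q)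
        (((CS.se_sound (CS.cp_bf P)).symm.trans h).trans (CS.se_sound (CS.cp_bf Q)))
    exact (CS.cp_bf P).trans (hbf ▸ (CS.cp_bf Q).symm)
end

section
/- For the auxiliary repetition-proof functions f_a and g_a on basic forms: g_a(f_a(P)) = f_a(f_a(P)) = f_a(P) and f_a(g_a(P)) = g_a(g_a(P)) = g_a(P), for every atom a and basic form P. -/
theorem stmt9 {A : Type} [DecidableEq A] (a : A) (P : CS A) (hP : CS.IsBasic P) :
    CS.gA a (CS.fA a P) = CS.fA a P ∧ CS.fA a (CS.fA a P) = CS.fA a P ∧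
    CS.fA a (CS.gA a P) = CS.gA a P ∧ CS.gA a (CS.gA a P) = CS.gA a P := by
  induction hP with
  | tt => simp [CS.fA, CS.gA]
  | ff => simp [CS.fA, CS.gA]
  | cond b hp hq ihp ihq =>
    by_cases h : b = a
    · subst h
      simp only [CS.fA, CS.gA, if_true, ihp.1, ihp.2.1, ihq.2.2, ihq.2.1]
      simp
    · simp [CS.fA, CS.gA, h]
end

section
/- rpbf is a normalization function: for every conditional statement P, rpbf(P) is an rp-basic form, and for every rp-basic form P, rpbf(P) = P. -/
namespace CS
variable {A : Type} [DecidableEq A]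

theorem my_rpf_cond (a : A) (p q : CS A) :
    rpf (.cond p (.atom a) q) = .cond (rpf (fA a p)) (.atom a) (rpf (gA a q)) := by
  rw [rpf]

theorem my_rpf_tt : rpf (.tt : CS A) = .tt := by
  rw [rpf]
  intro p b q h
  exact absurd h (by simp)
theorem my_rpf_ff : rpf (.ff : CS A) = .ff := by
  rw [rpf]
  intro p b q h
  exact absurd h (by simp)

theorem my_fA_fA (a : A) : ∀ p : CS A, fA a (fA a p) = fA a p
  | .tt => rfl
  | .ff => rfl
  | .atom _ => rfl
  | .cond p .tt q => rfl
  | .cond p .ff q => rfl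
  | .cond p (.cond _ _ _) q => rfl
  | .cond p (.atom b) q => by
      by_cases h : b = a
      · subst h
        simp only [fA, if_true, my_fA_fA b p]
      · simp [fA, h]

theorem my_gA_fA (a : A) : ∀ p : CS A, gA a (fA a p) = fA a p
  | .tt => rfl
  | .ff => rfl
  | .atom _ => rfl
  | .cond p .tt q => rfl
  | .cond p .ff q => rfl
  | .cond p (.cond _ _ _) q => rfl
  | .cond p (.atom b) q => by
      by_cases h : b = a
      · subst h
        simp only [fA, gA, if_true, my_gA_fA b p, my_fA_fA b p]
      · simp [fA, gA, h]

theorem my_gA_gA (a : A) : ∀ p : CS A, gA a (gA a p) = gA a p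
  | .tt => rfl
  | .ff => rfl
  | .atom _ => rfl
  | .cond p .tt q => rfl
  | .cond p .ff q => rfl
  | .cond p (.cond _ _ _) q => rfl
  | .cond p (.atom b) q => by
      by_cases h : b = a
      · subst h
        simp only [gA, if_true, my_gA_gA b q]
      · simp [gA, h]

theorem my_fA_gA (a : A) : ∀ p : CS A, fA a (gA a p) = gA a p
  | .tt => rfl
  | .ff => rfl
  | .atom _ => rfl
  | .cond p .tt q => rfl
  | .cond p .ff q => rfl
  | .cond p (.cond _ _ _) q => rfl
  | .cond p (.atom b) q => by
      by_cases h : b = a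
      · subst h
        simp only [fA, gA, if_true, my_fA_gA b q, my_gA_gA b q]
      · simp [fA, gA, h]

theorem my_isBasic_fA (a : A) {p : CS A} (h : IsBasic p) : IsBasic (fA a p) := by
  induction h with
  | tt => exact IsBasic.tt
  | ff => exact IsBasic.ff
  | cond b hp hq ihp ihq =>
      by_cases hb : b = a
      · subst hb
        simp only [fA, if_true]
        exact IsBasic.cond b ihp ihp
      · simp only [fA, if_neg hb]
        exact IsBasic.cond b hp hq

theorem my_isBasic_gA (a : A) {p : CS A} (h : IsBasic p) : IsBasic (gA a p) := by
  induction h with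
  | tt => exact IsBasic.tt
  | ff => exact IsBasic.ff
  | cond b hp hq ihp ihq =>
      by_cases hb : b = a
      · subst hb
        simp only [gA, if_true]
        exact IsBasic.cond b ihq ihq
      · simp only [gA, if_neg hb]
        exact IsBasic.cond b hp hq

theorem my_sideOk_rpf_fA (a : A) {p : CS A} (hb : IsBasic p) : SideOk a (rpf (fA a p)) := by
  cases hb with
  | tt => rw [show fA a .tt = (.tt : CS A) from rfl, my_rpf_tt]; trivial
  | ff => rw [show fA a .ff = (.ff : CS A) from rfl, my_rpf_ff]; trivial
  | cond b hx hy =>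
      by_cases h : b = a
      · subst h
        simp only [fA, if_true]
        rw [my_rpf_cond, my_fA_fA, my_gA_fA]
        exact Or.inr rfl
      · simp only [fA, if_neg h]
        rw [my_rpf_cond]
        exact Or.inl h

theorem my_sideOk_rpf_gA (a : A) {p : CS A} (hb : IsBasic p) : SideOk a (rpf (gA a p)) := by
  cases hb with
  | tt => rw [show gA a .tt = (.tt : CS A) from rfl, my_rpf_tt]; trivial
  | ff => rw [show gA a .ff = (.ff : CS A) from rfl, my_rpf_ff]; trivial
  | cond b hx hy =>
      by_cases h : b = a
      · subst h
        simp only [gA, if_true]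
        rw [my_rpf_cond, my_fA_gA, my_gA_gA]
        exact Or.inr rfl
      · simp only [gA, if_neg h]
        rw [my_rpf_cond]
        exact Or.inl h

theorem my_isRpBasic_rpf : ∀ (n : ℕ) (p : CS A), d p ≤ n → IsBasic p → IsRpBasic (rpf p) := by
  intro n
  induction n with
  | zero =>
      intro p hd hb
      cases hb with
      | tt => rw [my_rpf_tt]; exact IsRpBasic.tt
      | ff => rw [my_rpf_ff]; exact IsRpBasic.ff
      | cond b hx hy => simp [d] at hd
  | succ n ih =>
      intro p hd hb
      cases hb with
      | tt => rw [my_rpf_tt]; exact IsRpBasic.tt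
      | ff => rw [my_rpf_ff]; exact IsRpBasic.ff
      | @cond x y b hx hy =>
          simp only [d] at hd
          rw [my_rpf_cond]
          refine IsRpBasic.cond b ?_ ?_ (my_sideOk_rpf_fA b hx) (my_sideOk_rpf_gA b hy)
          · exact ih _ (le_trans (d_fA b x) (by omega)) (my_isBasic_fA b hx)
          · exact ih _ (le_trans (d_gA b y) (by omega)) (my_isBasic_gA b hy)

theorem my_rpf_fA_eq (a : A) {p : CS A} (hp : IsRpBasic p) (sp : SideOk a p)
    (hrec : rpf p = p) : rpf (fA a p) = p := by
  cases hp with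
  | tt => exact my_rpf_tt
  | ff => exact my_rpf_ff
  | @cond x y b _ _ _ _ =>
      by_cases h : b = a
      · subst h
        have hxy : x = y := by
          rcases sp with h' | h'
          · exact absurd rfl h'
          · exact h'
        subst hxy
        rw [my_rpf_cond] at hrec
        have h1 : rpf (fA b x) = x := by
          injection hrec
        simp only [fA, if_true]
        rw [my_rpf_cond, my_fA_fA, my_gA_fA, h1]
      · simp only [fA, if_neg h]
        exact hrec

theorem my_rpf_gA_eq (a : A) {p : CS A} (hp : IsRpBasic p) (sp : SideOk a p)
    (hrec : rpf p = p) : rpf (gA a p) = p := by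
  cases hp with
  | tt => exact my_rpf_tt
  | ff => exact my_rpf_ff
  | @cond x y b _ _ _ _ =>
      by_cases h : b = a
      · subst h
        have hxy : x = y := by
          rcases sp with h' | h'
          · exact absurd rfl h'
          · exact h'
        subst hxy
        rw [my_rpf_cond] at hrec
        have h1 : rpf (gA b x) = x := by
          injection hrec with _ _ h2
        simp only [gA, if_true]
        rw [my_rpf_cond, my_fA_gA, my_gA_gA, h1]
      · simp only [gA, if_neg h]
        exact hrec

theorem my_rpf_eq_self {p : CS A} (h : IsRpBasic p) : rpf p = p := by
  induction h with
  | tt => exact my_rpf_tt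
  | ff => exact my_rpf_ff
  | cond b hp hq sp sq ihp ihq =>
      rw [my_rpf_cond, my_rpf_fA_eq b hp sp ihp, my_rpf_gA_eq b hq sq ihq]

theorem my_isRpBasic_isBasic {p : CS A} (h : IsRpBasic p) : IsBasic p := by
  induction h with
  | tt => exact IsBasic.tt
  | ff => exact IsBasic.ff
  | cond b _ _ _ _ ihp ihq => exact IsBasic.cond b ihp ihq

theorem my_isBasic_srepl {x y z : CS A} (hx : IsBasic x) (hy : IsBasic y) (hz : IsBasic z) :
    IsBasic (srepl x y z) := by
  induction hx with
  | tt => exact hy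
  | ff => exact hz
  | cond b _ _ ihp ihq => exact IsBasic.cond b ihp ihq

theorem my_isBasic_bf : ∀ p : CS A, IsBasic (bf p)
  | .tt => IsBasic.tt
  | .ff => IsBasic.ff
  | .atom a => IsBasic.cond a IsBasic.tt IsBasic.ff
  | .cond p q r =>
      my_isBasic_srepl (my_isBasic_bf q) (my_isBasic_bf p) (my_isBasic_bf r)

theorem my_bf_eq_self {p : CS A} (h : IsBasic p) : bf p = p := by
  induction h with
  | tt => rfl
  | ff => rfl
  | cond b _ _ ihp ihq =>
      show srepl (bf (.atom b)) _ _ = _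
      simp only [bf, srepl, ihp, ihq]

end CS

theorem stmt12 {A : Type} [DecidableEq A] :
    (∀ P : CS A, CS.IsRpBasic (CS.rpf (CS.bf P))) ∧
    (∀ P : CS A, CS.IsRpBasic P → CS.rpf (CS.bf P) = P) := by
  constructor
  · intro P
    exact CS.my_isRpBasic_rpf (CS.d (CS.bf P)) _ le_rfl (CS.my_isBasic_bf P)
  · intro P h
    rw [CS.my_bf_eq_self (CS.my_isRpBasic_isBasic h)]
    exact CS.my_rpf_eq_self h
end

section
/- For the memorizing auxiliary functions, ℓ_a and r_a commute for distinct atoms: if a ≠ b then ℓ_a(ℓ_b(P)) = ℓ_b(ℓ_a(P)), r_a(ℓ_b(P)) = ℓ_b(r_a(P)), r_a(r_b(P)) = r_b(r_a(P)), and ℓ_a(r_b(P)) = r_b(ℓ_a(P)), for all basic forms P. -/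
theorem stmt15 {A : Type} [DecidableEq A] (a b : A) (hab : a ≠ b)
    (P : CS A) (hP : CS.IsBasic P) :
    CS.lA a (CS.lA b P) = CS.lA b (CS.lA a P) ∧
    CS.rA a (CS.lA b P) = CS.lA b (CS.rA a P) ∧
    CS.rA a (CS.rA b P) = CS.rA b (CS.rA a P) ∧
    CS.lA a (CS.rA b P) = CS.rA b (CS.lA a P) := by
  induction hP with
  | tt => simp [CS.lA, CS.rA]
  | ff => simp [CS.lA, CS.rA]
  | cond c hp hq ihp ihq =>
    obtain ⟨ihp1, ihp2, ihp3, ihp4⟩ := ihp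
    obtain ⟨ihq1, ihq2, ihq3, ihq4⟩ := ihq
    by_cases hca : c = a <;> by_cases hcb : c = b
    · exact absurd (hca ▸ hcb) hab
    · subst hca
      simp only [CS.lA, CS.rA, if_pos rfl, if_true, eq_self_iff_true, if_neg hcb, ihp1, ihp2, ihp3, ihp4,
        ihq1, ihq2, ihq3, ihq4, and_self]
    · subst hcb
      simp only [CS.lA, CS.rA, if_pos rfl, if_true, eq_self_iff_true, if_neg hca, ihp1, ihp2, ihp3, ihp4,
        ihq1, ihq2, ihq3, ihq4, and_self]
    · simp only [CS.lA, CS.rA, if_neg hca, if_neg hcb, ihp1, ihp2, ihp3, ihp4,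
        ihq1, ihq2, ihq3, ihq4, and_self]
end

section
/- For every basic form P, the axiom system CPmem (CP extended with the axiom x◁y▷(z◁u▷(v◁y▷w)) = x◁y▷(z◁u▷w)) proves P = mf(P). -/
namespace CS
variable {A : Type} [DecidableEq A]

/-- Negation-like term F ◁ y ▷ T used to swap arguments. -/
def Ng (y : CS A) : CS A := .cond .ff y .tt

theorem mswap (x y z : CS A) : CPmem (.cond x y z) (.cond z (Ng y) x) :=
  .symm (.trans (.cp4 z .ff y .tt x) (.congr (.cp2 z x) (.refl y) (.cp1 z x)))

theorem law5 (x y v w : CS A) : CPmem (.cond x y (.cond v y w)) (.cond x y w) :=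
  .trans (.congr (.refl x) (.refl y) (.symm (.cp2 .tt (.cond v y w))))
    (.trans (.mem x y .tt .ff v w) (.congr (.refl x) (.refl y) (.cp2 .tt w)))

theorem law2 (x y v w u z : CS A) :
    CPmem (.cond x y (.cond (.cond v y w) u z)) (.cond x y (.cond w u z)) :=
  .trans (.congr (.refl x) (.refl y) (mswap _ u z))
    (.trans (.mem x y z (Ng u) v w)
      (.congr (.refl x) (.refl y) (.symm (mswap w u z))))

theorem law6 (v y w x : CS A) : CPmem (.cond (.cond v y w) y x) (.cond v y x) :=
  .trans (mswap _ y x) <| .trans (.congr (.refl x) (.refl (Ng y)) (mswap v y w)) <|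
    .trans (law5 x (Ng y) w v) (.symm (mswap v y x))

theorem law4 (z u v y w x : CS A) :
    CPmem (.cond (.cond z u (.cond v y w)) y x) (.cond (.cond z u v) y x) :=
  .trans (mswap _ y x) <|
    .trans (.congr (.refl x) (.refl (Ng y)) (.congr (.refl z) (.refl u) (mswap v y w))) <|
      .trans (.mem x (Ng y) z u w v) (.symm (mswap _ y x))

theorem law3 (v y w u z x : CS A) :
    CPmem (.cond (.cond (.cond v y w) u z) y x) (.cond (.cond v u z) y x) :=
  .trans (mswap _ y x) <|
    .trans (.congr (.refl x) (.refl (Ng y)) (.congr (mswap v y w) (.refl u) (.refl z))) <|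
      .trans (law2 x (Ng y) w v u z) (.symm (mswap _ y x))

theorem lA_basic (a : A) {p : CS A} (hp : IsBasic p) : IsBasic (lA a p) := by
  induction hp with
  | tt => exact .tt
  | ff => exact .ff
  | @cond x y b hx hy ihx ihy =>
      by_cases h : b = a
      · simpa [lA, h] using ihx
      · simpa [lA, h] using IsBasic.cond b ihx ihy

theorem rA_basic (a : A) {p : CS A} (hp : IsBasic p) : IsBasic (rA a p) := by
  induction hp with
  | tt => exact .tt
  | ff => exact .ff
  | @cond x y b hx hy ihx ihy =>
      by_cases h : b = a
      · simpa [rA, h] using ihy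
      · simpa [rA, h] using IsBasic.cond b ihx ihy

theorem lA_L (a : A) {p : CS A} (hp : IsBasic p) :
    ∀ s : CS A, CPmem (.cond p (.atom a) s) (.cond (lA a p) (.atom a) s) := by
  induction hp with
  | tt => intro s; simp only [lA]; exact .refl _
  | ff => intro s; simp only [lA]; exact .refl _
  | @cond x y b hx hy ihx ihy =>
      by_cases h : b = a
      · subst h
        intro s
        simp only [lA, if_pos rfl]
        exact .trans (law6 x (.atom b) y s) (ihx s)
      · intro s
        simp only [lA, if_neg h]
        refine .trans (.symm (law3 x (.atom a) (lA a x) (.atom b) y s)) ?_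
        refine .trans (.congr (.congr (ihx (lA a x)) (.refl _) (.refl _)) (.refl _) (.refl _)) ?_
        refine .trans (law3 (lA a x) (.atom a) (lA a x) (.atom b) y s) ?_
        refine .trans (.symm (law4 (lA a x) (.atom b) y (.atom a) (lA a y) s)) ?_
        refine .trans (.congr (.congr (.refl _) (.refl _) (ihy (lA a y))) (.refl _) (.refl _)) ?_
        exact law4 (lA a x) (.atom b) (lA a y) (.atom a) (lA a y) s

theorem rA_R (a : A) {q : CS A} (hq : IsBasic q) :
    ∀ s : CS A, CPmem (.cond s (.atom a) q) (.cond s (.atom a) (rA a q)) := by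
  induction hq with
  | tt => intro s; simp only [rA]; exact .refl _
  | ff => intro s; simp only [rA]; exact .refl _
  | @cond x y b hx hy ihx ihy =>
      by_cases h : b = a
      · subst h
        intro s
        simp only [rA, if_pos rfl]
        exact .trans (law5 s (.atom b) x y) (ihy s)
      · intro s
        simp only [rA, if_neg h]
        refine .trans (.symm (law2 s (.atom a) x x (.atom b) y)) ?_
        refine .trans (.congr (.refl _) (.refl _)
          (.congr (ihx x) (.refl _) (.refl _))) ?_
        refine .trans (law2 s (.atom a) x (rA a x) (.atom b) y) ?_
        refine .trans (.symm (.mem s (.atom a) (rA a x) (.atom b) y y)) ?_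
        refine .trans (.congr (.refl _) (.refl _)
          (.congr (.refl _) (.refl _) (ihy y))) ?_
        exact .mem s (.atom a) (rA a x) (.atom b) y (rA a y)

theorem main_mem (n : ℕ) : ∀ P : CS A, IsBasic P → d P ≤ n → CPmem P (mf P) := by
  induction n with
  | zero =>
      intro P hP hd
      cases hP with
      | tt => simp only [mf]; exact .refl _
      | ff => simp only [mf]; exact .refl _
      | cond a hp hq => simp [d] at hd
  | succ n ih =>
      intro P hP hd
      cases hP with
      | tt => simp only [mf]; exact .refl _
      | ff => simp only [mf]; exact .refl _
      | @cond p q a hp hq =>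
          have hdp : d p ≤ n := by simp only [d] at hd; omega
          have hdq : d q ≤ n := by simp only [d] at hd; omega
          rw [mf]
          refine .trans (lA_L a hp q) ?_
          refine .trans (rA_R a hq (lA a p)) ?_
          exact .congr (ih (lA a p) (lA_basic a hp) (le_trans (d_lA a p) hdp))
            (.refl _) (ih (rA a q) (rA_basic a hq) (le_trans (d_rA a q) hdq))

end CS

theorem stmt17 {A : Type} [DecidableEq A] (P : CS A) (hP : CS.IsBasic P) :
    CS.CPmem P (CS.mf P) :=
  CS.main_mem (CS.d P) P hP le_rfl
end
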